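/- Let G be a group and a ∈ G an element such that ⟨a, a^g⟩ is nilpotent of class at most 2 for every g ∈ G. Then a is a left 3-Engel element of G, i.e., [x, a, a, a] = 1 for all x ∈ G. -/

import Mathlib

/-- Group commutator `[x,y] = x⁻¹ y⁻¹ x y`. -/
def bra {G : Type*} [Group G] (x y : G) : G := x⁻¹ * y⁻¹ * x * y

/-- Conjugation `g^h = h⁻¹ g h`. -/
def cnj {G : Type*} [Group G] (g h : G) : G := h⁻¹ * g * h

/-- A subgroup is nilpotent of class at most `n`. -/
def NilClassLe {G : Type*} [Group G] (H : Subgroup G) (n : ℕ) : Prop :=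
  upperCentralSeries H n = ⊤

/-- If `⟨a, a^g⟩` is nilpotent of class at most 2 for all `g`, then `a` is a
left 3-Engel element. -/
theorem stmt10 {G : Type*} [Group G] (a : G)
    (h : ∀ g : G, NilClassLe (Subgroup.closure {a, cnj a g}) 2) :
    ∀ x : G, bra (bra (bra x a) a) a = 1 := by
  intro x
  set H := Subgroup.closure {a, cnj a x} with hH
  have ha : a ∈ H := Subgroup.subset_closure (by simp)
  have hc : cnj a x ∈ H := Subgroup.subset_closure (by simp)
  have hU : bra x a ∈ H := by
    have hba : bra x a = (cnj a x)⁻¹ * a := by simp [bra, cnj]; group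
    rw [hba]; exact mul_mem (inv_mem hc) ha
  set A : H := ⟨a, ha⟩ with hA
  set U : H := ⟨bra x a, hU⟩ with hUdef
  have h2 : upperCentralSeries H 2 = ⊤ := h x
  have hmem : U⁻¹ * A⁻¹ * U * A ∈ Subgroup.center H := by
    have hU2 : (U⁻¹ : H) ∈ upperCentralSeries H (1 + 1) := by
      have : (1 : ℕ) + 1 = 2 := rfl
      rw [this, h2]; trivial
    replace hU2 := (Subgroup.mem_upperCentralSeries_succ_iff (n := 1)).mp hU2
    have := hU2 A⁻¹
    simpa [upperCentralSeries_one, commutatorElement_def] using this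
  set z : H := U⁻¹ * A⁻¹ * U * A with hzdef
  have hcomm := Subgroup.mem_center_iff.mp hmem A
  have hz1 : z⁻¹ * A⁻¹ * z * A = 1 := by
    rw [mul_assoc, ← hcomm]; group
  have hcoe : bra (bra (bra x a) a) a = ((z⁻¹ * A⁻¹ * z * A : H) : G) := by
    push_cast [hzdef, hUdef, hA, bra]
    group
  rw [hcoe, hz1]
  rfl
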